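/- arXiv:1812.04522 — 4 statements merged into one kernel-verified Lean document; each statement's English description precedes it below -/
import Mathlib

section
/- Let l < z < u and define the single-breakpoint lifting L(d) = (min(d,z), max(d−z,0)) for d ∈ [l,u]. Then the convex hull of the image Ξ′ = L([l,u]) equals the triangle {(d₁,d₂) ∈ ℝ² : d₁ ≤ z, d₂ ≥ 0, (d₁ − l)/(z − l) ≥ d₂/(u − z)}. -/
/-- The convex hull of the single-breakpoint lifted segment
`Ξ′ = {(min(d,z), max(d−z,0)) : d ∈ [l,u]}` is the triangle
`{(d₁,d₂) : d₁ ≤ z, d₂ ≥ 0, (d₁ − l)/(z − l) ≥ d₂/(u − z)}`. -/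
theorem stmt_6 (l z u : ℝ) (hlz : l < z) (hzu : z < u) :
    convexHull ℝ ((fun d : ℝ => (min d z, max (d - z) 0)) '' Set.Icc l u) =
      {p : ℝ × ℝ | p.1 ≤ z ∧ 0 ≤ p.2 ∧ p.2 / (u - z) ≤ (p.1 - l) / (z - l)} := by
  have hzl : (0:ℝ) < z - l := by linarith
  have huz : (0:ℝ) < u - z := by linarith
  have hset : {p : ℝ × ℝ | p.1 ≤ z ∧ 0 ≤ p.2 ∧ p.2 / (u - z) ≤ (p.1 - l) / (z - l)} =
      {p : ℝ × ℝ | p.1 ≤ z ∧ 0 ≤ p.2 ∧ p.2 * (z - l) ≤ (p.1 - l) * (u - z)} := by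
    ext p
    simp only [Set.mem_setOf_eq, div_le_div_iff₀ huz hzl]
  rw [hset]
  apply le_antisymm
  · -- convex hull ⊆ triangle
    apply convexHull_min
    · rintro p ⟨d, ⟨hdl, hdu⟩, rfl⟩
      rcases le_total d z with h | h
      · simp only [Set.mem_setOf_eq, min_eq_left h, max_eq_right (by linarith : d - z ≤ 0)]
        refine ⟨h, le_refl _, ?_⟩
        nlinarith
      · simp only [Set.mem_setOf_eq, min_eq_right h, max_eq_left (by linarith : 0 ≤ d - z)]
        refine ⟨le_refl _, by linarith, ?_⟩
        nlinarith
    · -- the multiplied-form triangle is convex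
      rintro p hp q hq a b ha hb hab
      obtain ⟨hp1, hp2, hp3⟩ := hp
      obtain ⟨hq1, hq2, hq3⟩ := hq
      have hb' : b = 1 - a := by linarith
      subst hb'
      refine ⟨?_, ?_, ?_⟩
      · show a * p.1 + (1 - a) * q.1 ≤ z
        nlinarith [mul_le_mul_of_nonneg_left hp1 ha, mul_le_mul_of_nonneg_left hq1 hb]
      · show 0 ≤ a * p.2 + (1 - a) * q.2
        have : 0 ≤ (1 - a) * q.2 := mul_nonneg hb hq2
        nlinarith [mul_nonneg ha hp2]
      · show (a * p.2 + (1 - a) * q.2) * (z - l) ≤ (a * p.1 + (1 - a) * q.1 - l) * (u - z)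
        nlinarith [mul_le_mul_of_nonneg_left hp3 ha, mul_le_mul_of_nonneg_left hq3 hb]
  · -- triangle ⊆ convex hull
    rintro ⟨p1, p2⟩ ⟨hp1, hp2, hp3⟩
    simp only [Set.mem_setOf_eq] at hp1 hp2 hp3
    -- vertices
    have hA : ((l, 0) : ℝ × ℝ) ∈ (fun d : ℝ => (min d z, max (d - z) 0)) '' Set.Icc l u := by
      refine ⟨l, ⟨le_refl _, by linarith⟩, ?_⟩
      simp [min_eq_left hlz.le, max_eq_right (by linarith : l - z ≤ 0)]
    have hB : ((z, 0) : ℝ × ℝ) ∈ (fun d : ℝ => (min d z, max (d - z) 0)) '' Set.Icc l u := by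
      refine ⟨z, ⟨hlz.le, hzu.le⟩, ?_⟩
      simp
    have hC : ((z, u - z) : ℝ × ℝ) ∈ (fun d : ℝ => (min d z, max (d - z) 0)) '' Set.Icc l u := by
      refine ⟨u, ⟨by linarith, le_refl _⟩, ?_⟩
      simp [min_eq_right hzu.le, max_eq_left (by linarith : (0:ℝ) ≤ u - z)]
    set a : ℝ := (z - p1) / (z - l) with ha_def
    set c : ℝ := p2 / (u - z) with hc_def
    set b : ℝ := 1 - a - c with hb_def
    have ha0 : 0 ≤ a := div_nonneg (by linarith) hzl.le
    have hc0 : 0 ≤ c := div_nonneg hp2 huz.le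
    have hne1 : (z - l) ≠ 0 := hzl.ne'
    have hne2 : (u - z) ≠ 0 := huz.ne'
    have hb0 : 0 ≤ b := by
      have key : (z - p1) / (z - l) + p2 / (u - z) ≤ 1 := by
        rw [div_add_div _ _ hne1 hne2, div_le_one (by positivity)]
        nlinarith
      rw [hb_def, ha_def, hc_def]
      linarith
    have habc : a + b + c = 1 := by rw [hb_def]; ring
    have h1 : p1 = a * l + b * z + c * z := by
      rw [hb_def, ha_def, hc_def]; field_simp; ring
    have h2 : p2 = a * 0 + b * 0 + c * (u - z) := by
      rw [hc_def]; field_simp; ring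
    have hcomb : (p1, p2) = a • ((l, 0) : ℝ × ℝ) + b • ((z, 0) : ℝ × ℝ) + c • ((z, u - z) : ℝ × ℝ) := by
      refine Prod.ext ?_ ?_
      · simpa [Prod.smul_mk, smul_eq_mul] using h1
      · simpa [Prod.smul_mk, smul_eq_mul] using h2
    rw [hcomb]
    have hconv := convex_convexHull ℝ ((fun d : ℝ => (min d z, max (d - z) 0)) '' Set.Icc l u)
    have hAh := subset_convexHull ℝ _ hA
    have hBh := subset_convexHull ℝ _ hB
    have hCh := subset_convexHull ℝ _ hC
    rcases eq_or_lt_of_le (by linarith : (0:ℝ) ≤ a + b) with h | h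
    · have ha' : a = 0 := by linarith
      have hb' : b = 0 := by linarith
      have hc' : c = 1 := by linarith
      simpa [ha', hb', hc'] using hCh
    · have hq : (a / (a + b)) • ((l, 0) : ℝ × ℝ) + (b / (a + b)) • ((z, 0) : ℝ × ℝ) ∈
          convexHull ℝ ((fun d : ℝ => (min d z, max (d - z) 0)) '' Set.Icc l u) := by
        apply hconv hAh hBh (div_nonneg ha0 h.le) (div_nonneg hb0 h.le)
        field_simp
      have := hconv hq hCh (by linarith : (0:ℝ) ≤ a + b) hc0 (by linarith)
      rw [smul_add, smul_smul, smul_smul, mul_div_cancel₀ _ h.ne', mul_div_cancel₀ _ h.ne'] at this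
      convert this using 2
end

section
/- Let l < z < u. The extreme points of the convex hull of the single-breakpoint lifted set L([l,u]) ⊂ ℝ² are exactly L(l) = (l,0), L(z) = (z,0), and L(u) = (z, u−z). -/
/-- Representation of points in the convex hull of the triangle. -/
lemma rep3 (l z u : ℝ) {p : ℝ × ℝ}
    (hp : p ∈ convexHull ℝ ({((l : ℝ), (0 : ℝ)), (z, 0), (z, u - z)} : Set (ℝ × ℝ))) :
    ∃ a b c : ℝ, 0 ≤ a ∧ 0 ≤ b ∧ 0 ≤ c ∧ a + b + c = 1 ∧
      p.1 = a * l + b * z + c * z ∧ p.2 = c * (u - z) := by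
  rw [show ({((l : ℝ), (0 : ℝ)), (z, 0), (z, u - z)} : Set (ℝ × ℝ)) =
      insert (l, 0) {(z, 0), (z, u - z)} from rfl,
    convexHull_insert ⟨(z, 0), Set.mem_insert _ _⟩, convexHull_pair,
    mem_convexJoin] at hp
  obtain ⟨a0, rfl, y, ⟨b', c', hb', hc', hbc, rfl⟩, a', t, ha', ht, hat, rfl⟩ := hp
  refine ⟨a', t * b', t * c', ha', by positivity, by positivity, by nlinarith, ?_, ?_⟩ <;>
  · simp only [Prod.fst_add, Prod.snd_add, Prod.smul_fst, Prod.smul_snd, smul_eq_mul]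
    ring

set_option maxHeartbeats 1600000 in
/-- The extreme points of the convex hull of the single-breakpoint lifted segment
are exactly `L(l) = (l,0)`, `L(z) = (z,0)` and `L(u) = (z, u−z)`. -/
theorem stmt_8 (l z u : ℝ) (hlz : l < z) (hzu : z < u) :
    Set.extremePoints ℝ
        (convexHull ℝ ((fun d : ℝ => (min d z, max (d - z) 0)) '' Set.Icc l u)) =
      {(l, 0), (z, 0), (z, u - z)} := by
  have hzl : (0 : ℝ) < z - l := by linarith
  have huz : (0 : ℝ) < u - z := by linarith
  -- the convex hull of the image is the convex hull of the triangle
  have himg : convexHull ℝ ((fun d : ℝ => (min d z, max (d - z) 0)) '' Set.Icc l u)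
      = convexHull ℝ ({((l : ℝ), (0 : ℝ)), (z, 0), (z, u - z)} : Set (ℝ × ℝ)) := by
    apply le_antisymm
    · apply convexHull_min _ (convex_convexHull ℝ _)
      rintro p ⟨d, hd, rfl⟩
      rcases le_or_gt d z with h | h
      · have hLd : ((fun d : ℝ => (min d z, max (d - z) 0)) d) = (d, 0) := by
          simp [min_eq_left h, max_eq_right (by linarith : d - z ≤ 0)]
        rw [hLd]
        apply segment_subset_convexHull (Set.mem_insert _ _)
          (Set.mem_insert_of_mem _ (Set.mem_insert _ _))
        refine ⟨(z - d) / (z - l), (d - l) / (z - l),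
          div_nonneg (by linarith) hzl.le, div_nonneg (by linarith [hd.1]) hzl.le,
          by field_simp; ring, ?_⟩
        simp only [Prod.smul_mk, smul_eq_mul, Prod.mk_add_mk, mul_zero, add_zero]
        have : (z - d) / (z - l) * l + (d - l) / (z - l) * z = d := by
          field_simp; ring
        rw [this]
      · have hLd : ((fun d : ℝ => (min d z, max (d - z) 0)) d) = (z, d - z) := by
          simp [min_eq_right h.le, max_eq_left (by linarith : (0:ℝ) ≤ d - z)]
        rw [hLd]
        apply segment_subset_convexHull
          (Set.mem_insert_of_mem _ (Set.mem_insert _ _))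
          (Set.mem_insert_of_mem _ (Set.mem_insert_of_mem _ (Set.mem_singleton _)))
        refine ⟨(u - d) / (u - z), (d - z) / (u - z),
          div_nonneg (by linarith [hd.2]) huz.le, div_nonneg (by linarith) huz.le,
          by field_simp; ring, ?_⟩
        simp only [Prod.smul_mk, smul_eq_mul, Prod.mk_add_mk, mul_zero, zero_add]
        have h1 : (u - d) / (u - z) * z + (d - z) / (u - z) * z = z := by
          field_simp; ring
        have h2 : (d - z) / (u - z) * (u - z) = d - z := by
          field_simp
        rw [h1, h2]
    · apply convexHull_mono
      rintro p (rfl | rfl | rfl)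
      · exact ⟨l, ⟨le_refl l, by linarith⟩, by
          simp [min_eq_left hlz.le, max_eq_right (by linarith : l - z ≤ 0)]⟩
      · exact ⟨z, ⟨hlz.le, hzu.le⟩, by simp⟩
      · exact ⟨u, ⟨by linarith, le_refl u⟩, by
          simp [min_eq_right hzu.le, max_eq_left (by linarith : (0:ℝ) ≤ u - z)]⟩
  rw [himg]
  apply le_antisymm
  · exact extremePoints_convexHull_subset
  · rintro p (rfl | rfl | rfl)
    -- (l, 0) is extreme
    · refine ⟨subset_convexHull ℝ _ (Set.mem_insert _ _), ?_⟩
      rintro x1 hx1 x2 hx2 ⟨s, t, hs, ht, hst, hx⟩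
      obtain ⟨a1, b1, c1, ha1, hb1, hc1, h1, e11, e12⟩ := rep3 l z u hx1
      obtain ⟨a2, b2, c2, ha2, hb2, hc2, h2, e21, e22⟩ := rep3 l z u hx2
      have hx1' : s * x1.1 + t * x2.1 = l := by
        have := congrArg Prod.fst hx
        simpa [Prod.smul_fst, smul_eq_mul] using this
      have key' : (s * (b1 + c1) + t * (b2 + c2)) * (z - l) = 0 := by
        linear_combination hx1' - s * e11 - t * e21 - l * s * h1 - l * t * h2 - l * hst
      have key : s * (b1 + c1) + t * (b2 + c2) = 0 :=
        (mul_eq_zero.mp key').resolve_right (by linarith)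
      have t1 : s * (b1 + c1) = 0 := by
        nlinarith [mul_nonneg hs.le (by linarith : (0:ℝ) ≤ b1 + c1),
          mul_nonneg ht.le (by linarith : (0:ℝ) ≤ b2 + c2)]
      have t2 : t * (b2 + c2) = 0 := by linarith
      have hbc1 : b1 + c1 = 0 := (mul_eq_zero.mp t1).resolve_left (ne_of_gt hs)
      have hbc2 : b2 + c2 = 0 := (mul_eq_zero.mp t2).resolve_left (ne_of_gt ht)
      have hb1' : b1 = 0 := by linarith
      have hc1' : c1 = 0 := by linarith
      have hb2' : b2 = 0 := by linarith
      have hc2' : c2 = 0 := by linarith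
      have ha1' : a1 = 1 := by linarith
      have ha2' : a2 = 1 := by linarith
      exact Prod.ext (by rw [e11, ha1', hb1', hc1']; ring) (by rw [e12, hc1']; ring)
    -- (z, 0) is extreme
    · refine ⟨subset_convexHull ℝ _ (Set.mem_insert_of_mem _ (Set.mem_insert _ _)), ?_⟩
      rintro x1 hx1 x2 hx2 ⟨s, t, hs, ht, hst, hx⟩
      obtain ⟨a1, b1, c1, ha1, hb1, hc1, h1, e11, e12⟩ := rep3 l z u hx1
      obtain ⟨a2, b2, c2, ha2, hb2, hc2, h2, e21, e22⟩ := rep3 l z u hx2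
      have hx1' : s * x1.1 + t * x2.1 = z := by
        have := congrArg Prod.fst hx
        simpa [Prod.smul_fst, smul_eq_mul] using this
      have hx2' : s * x1.2 + t * x2.2 = 0 := by
        have := congrArg Prod.snd hx
        simpa [Prod.smul_snd, smul_eq_mul] using this
      rw [e12, e22] at hx2'
      have t1 : s * (c1 * (u - z)) = 0 := by
        nlinarith [mul_nonneg hs.le (mul_nonneg hc1 huz.le),
          mul_nonneg ht.le (mul_nonneg hc2 huz.le)]
      have t2 : t * (c2 * (u - z)) = 0 := by linarith
      have hc1' : c1 = 0 :=
        (mul_eq_zero.mp ((mul_eq_zero.mp t1).resolve_left (ne_of_gt hs))).resolve_right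
          (by linarith)
      have hc2' : c2 = 0 :=
        (mul_eq_zero.mp ((mul_eq_zero.mp t2).resolve_left (ne_of_gt ht))).resolve_right
          (by linarith)
      have key' : (s * a1 + t * a2) * (z - l) = 0 := by
        linear_combination -hx1' + s * e11 + t * e21 + z * hst + s * z * h1 + t * z * h2
      have key : s * a1 + t * a2 = 0 :=
        (mul_eq_zero.mp key').resolve_right (by linarith)
      have u1 : s * a1 = 0 := by
        nlinarith [mul_nonneg hs.le ha1, mul_nonneg ht.le ha2]
      have u2 : t * a2 = 0 := by linarith
      have ha1' : a1 = 0 := (mul_eq_zero.mp u1).resolve_left (ne_of_gt hs)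
      have ha2' : a2 = 0 := (mul_eq_zero.mp u2).resolve_left (ne_of_gt ht)
      have hb1' : b1 = 1 := by linarith
      have hb2' : b2 = 1 := by linarith
      exact Prod.ext (by rw [e11, ha1', hb1', hc1']; ring) (by rw [e12, hc1']; ring)
    -- (z, u - z) is extreme
    · refine ⟨subset_convexHull ℝ _
        (Set.mem_insert_of_mem _ (Set.mem_insert_of_mem _ (Set.mem_singleton _))), ?_⟩
      rintro x1 hx1 x2 hx2 ⟨s, t, hs, ht, hst, hx⟩
      obtain ⟨a1, b1, c1, ha1, hb1, hc1, h1, e11, e12⟩ := rep3 l z u hx1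
      obtain ⟨a2, b2, c2, ha2, hb2, hc2, h2, e21, e22⟩ := rep3 l z u hx2
      have hx2' : s * x1.2 + t * x2.2 = u - z := by
        have := congrArg Prod.snd hx
        simpa [Prod.smul_snd, smul_eq_mul] using this
      rw [e12, e22] at hx2'
      have key' : (s * (1 - c1) + t * (1 - c2)) * (u - z) = 0 := by
        linear_combination (u - z) * hst - hx2'
      have key : s * (1 - c1) + t * (1 - c2) = 0 :=
        (mul_eq_zero.mp key').resolve_right (by linarith)
      have t1 : s * (1 - c1) = 0 := by
        nlinarith [mul_nonneg hs.le (by linarith : (0:ℝ) ≤ 1 - c1),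
          mul_nonneg ht.le (by linarith : (0:ℝ) ≤ 1 - c2)]
      have t2 : t * (1 - c2) = 0 := by linarith
      have hc1' : c1 = 1 := by
        have := (mul_eq_zero.mp t1).resolve_left (ne_of_gt hs); linarith
      have hc2' : c2 = 1 := by
        have := (mul_eq_zero.mp t2).resolve_left (ne_of_gt ht); linarith
      have ha1' : a1 = 0 := by linarith
      have hb1' : b1 = 0 := by linarith
      have ha2' : a2 = 0 := by linarith
      have hb2' : b2 = 0 := by linarith
      exact Prod.ext (by rw [e11, ha1', hb1', hc1']; ring) (by rw [e12, hc1']; ring)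
end

section
/- Consider minimizing a linear objective over decision rules: for any polytope Ξ′ ⊇ L(Ξ) (where Ξ = [l,u]^{T−1} and L applies a componentwise lifting), the optimal value of the piecewise-linear decision rule problem (linear rules over Ξ′) is at most the optimal value of the linear decision rule problem over Ξ. That is, PLDRs weakly dominate LDRs in the look-ahead model. -/
/-- PLDRs weakly dominate LDRs in the look-ahead (minimization) model.
`Ξ = [l,u]^{T−1}` is a box, `L` is a (componentwise) lifting into the lifted space `β`,
`R` is the linear retraction with `R ∘ L = id` on `Ξ`, and `Ξ′ ⊇ L(Ξ)` is a lifted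
uncertainty set mapped by `R` into `Ξ`.  Constraints `g` depend on the uncertainty only
through the retracted point, the (linear) objective of an affine rule is evaluated at the
expectation points `E` and `E′` with `R E′ = E`.  Then the optimal value over lifted
affine rules (PLDRs) is at most the optimal value over affine rules on `Ξ` (LDRs). -/
theorem stmt_10 {T : ℕ} {β : Type*} [AddCommGroup β] [Module ℝ β]
    (l u : Fin T → ℝ) (Ξ : Set (Fin T → ℝ)) (hΞ : Ξ = Set.Icc l u)
    (L : (Fin T → ℝ) → β) (R : β →ₗ[ℝ] (Fin T → ℝ)) (Ξ' : Set β)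
    (hLΞ : L '' Ξ ⊆ Ξ') (hRL : ∀ d ∈ Ξ, R (L d) = d) (hR : ∀ d' ∈ Ξ', R d' ∈ Ξ)
    (g : (Fin T → ℝ) → ℝ → Prop) (c : ℝ)
    (E : Fin T → ℝ) (E' : β) (hE : R E' = E)
    (SLDR SPLDR : Set ℝ)
    (hSLDR : SLDR = {v | ∃ x : (Fin T → ℝ) →ᵃ[ℝ] ℝ,
        (∀ d ∈ Ξ, g d (x d)) ∧ v = c * x E})
    (hSPLDR : SPLDR = {v | ∃ x' : β →ᵃ[ℝ] ℝ,
        (∀ d' ∈ Ξ', g (R d') (x' d')) ∧ v = c * x' E'})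
    (hne : SLDR.Nonempty) (hbdd : BddBelow SPLDR) :
    sInf SPLDR ≤ sInf SLDR := by
  apply csInf_le_csInf hbdd hne
  intro v hv
  rw [hSLDR] at hv
  obtain ⟨x, hx, hvx⟩ := hv
  rw [hSPLDR]
  refine ⟨x.comp R.toAffineMap, ?_, ?_⟩
  · intro d' hd'
    exact hx (R d') (hR d' hd')
  · simp [hvx, hE]
end

section
/- Suppose the optimal value v(𝒵) of a lifted linear decision-rule minimization problem is defined using breakpoint set 𝒵, where constraints are imposed over the exact convex hull of the lifted hyper-rectangle. If 𝒵 ⊆ 𝒵′ (the breakpoint set is refined), then v(𝒵′) ≤ v(𝒵): adding breakpoints cannot worsen the optimal value. -/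
/-- Refining the breakpoint set cannot worsen the optimal value of the lifted linear
decision-rule minimization problem over a hyper-rectangle `Ξ = [l,u]`.  The coarse
lifting `L` (breakpoints `𝒵`) and the fine lifting `L'` (breakpoints `𝒵′ ⊇ 𝒵`) are
related by a surjective linear aggregation map `P` with `P ∘ L' = L` on `Ξ` and
`R ∘ P = R'` for the linear retractions `R, R'`.  Constraints `g` are imposed over the
exact convex hulls of the lifted hyper-rectangle and depend on the uncertainty through
the retraction; objectives are evaluated at the expectation points `Ec`, `Ef` with
`P Ef = Ec`.  Then `v(𝒵′) ≤ v(𝒵)`. -/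
theorem stmt_17 {n : ℕ} {β β' : Type*}
    [AddCommGroup β] [Module ℝ β] [AddCommGroup β'] [Module ℝ β']
    (l u : Fin n → ℝ) (Ξ : Set (Fin n → ℝ)) (hΞ : Ξ = Set.Icc l u)
    (L : (Fin n → ℝ) → β) (L' : (Fin n → ℝ) → β')
    (P : β' →ₗ[ℝ] β) (hPsurj : Function.Surjective P)
    (hPL : ∀ d ∈ Ξ, P (L' d) = L d)
    (R : β →ₗ[ℝ] (Fin n → ℝ)) (R' : β' →ₗ[ℝ] (Fin n → ℝ))
    (hRP : R.comp P = R')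
    (hRL : ∀ d ∈ Ξ, R (L d) = d) (hRL' : ∀ d ∈ Ξ, R' (L' d) = d)
    (g : (Fin n → ℝ) → ℝ → Prop) (c : ℝ)
    (Ec : β) (Ef : β') (hE : P Ef = Ec)
    (Scoarse Sfine : Set ℝ)
    (hScoarse : Scoarse = {v | ∃ x : β →ᵃ[ℝ] ℝ,
        (∀ p ∈ convexHull ℝ (L '' Ξ), g (R p) (x p)) ∧ v = c * x Ec})
    (hSfine : Sfine = {v | ∃ x' : β' →ᵃ[ℝ] ℝ,
        (∀ p' ∈ convexHull ℝ (L' '' Ξ), g (R' p') (x' p')) ∧ v = c * x' Ef})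
    (hne : Scoarse.Nonempty) (hbdd : BddBelow Sfine) :
    sInf Sfine ≤ sInf Scoarse := by
  have hsub : Scoarse ⊆ Sfine := by
    rw [hScoarse, hSfine]
    rintro v ⟨x, hfeas, hv⟩
    refine ⟨x.comp P.toAffineMap, ?_, ?_⟩
    · intro p' hp'
      have hmem : P p' ∈ convexHull ℝ (L '' Ξ) := by
        have h1 : P '' (L' '' Ξ) = L '' Ξ := by
          ext b
          constructor
          · rintro ⟨_, ⟨d, hd, rfl⟩, rfl⟩
            exact ⟨d, hd, (hPL d hd).symm⟩
          · rintro ⟨d, hd, rfl⟩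
            exact ⟨L' d, ⟨d, hd, rfl⟩, hPL d hd⟩
        have := P.image_convexHull (L' '' Ξ)
        rw [h1] at this
        rw [← this]
        exact ⟨p', hp', rfl⟩
      have hg := hfeas (P p') hmem
      have hR : R (P p') = R' p' := by
        rw [← hRP]; rfl
      rw [hR] at hg
      exact hg
    · rw [hv]
      simp [AffineMap.comp_apply, hE]
  exact csInf_le_csInf hbdd hne hsub
end
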